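/- arXiv:1704.07159 — 5 statements merged into one kernel-verified Lean document; each statement's English description precedes it below -/
import Mathlib

section
/- Let Λ be a finite cubic simple graph. Then Dart(Λ) is bipartite if and only if Λ is bipartite. -/
open SimpleGraph

/-- The dart graph of a graph `Λ`: vertices are the arcs (darts) of `Λ`,
with `(u,v)` adjacent to `(u',v')` iff (`u' = v` and `u ≠ v'`) or (`u = v'` and `u' ≠ v`). -/
def dartGraph {V : Type*} (Λ : SimpleGraph V) : SimpleGraph Λ.Dart where
  Adj d e := (e.fst = d.snd ∧ d.fst ≠ e.snd) ∨ (d.fst = e.snd ∧ e.fst ≠ d.snd)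
  symm := ⟨fun d e h => h.symm⟩
  loopless := ⟨by
    rintro d (⟨h1, -⟩ | ⟨h1, -⟩) <;> exact Λ.irrefl (h1 ▸ d.adj)⟩

instance {V : Type*} [DecidableEq V] (Λ : SimpleGraph V) :
    DecidableRel (dartGraph Λ).Adj := fun d e =>
  inferInstanceAs (Decidable ((e.fst = d.snd ∧ d.fst ≠ e.snd) ∨ (d.fst = e.snd ∧ e.fst ≠ d.snd)))

/-- the dart graph of a finite cubic graph is bipartite iff the graph itself is. -/
theorem dartGraph_bipartite_iff {V : Type*} [Fintype V] [DecidableEq V]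
    (Λ : SimpleGraph V) [DecidableRel Λ.Adj] (hΛ : Λ.IsRegularOfDegree 3) :
    (dartGraph Λ).Colorable 2 ↔ Λ.Colorable 2 := by
  have fin2 : ∀ a b x : Fin 2, a ≠ x → b ≠ x → a = b := by decide
  constructor
  · rintro ⟨c⟩
    have h3 : ∀ v u : V, ∃ w, Λ.Adj v w ∧ w ≠ u := by
      intro v u
      have hc : 1 < (Λ.neighborFinset v).card := by
        have := hΛ v
        rw [← Λ.card_neighborFinset_eq_degree v] at this
        omega
      obtain ⟨w, hw, hwu⟩ := Finset.exists_mem_ne hc u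
      exact ⟨w, (Λ.mem_neighborFinset v w).mp hw, hwu⟩
    have h3' : ∀ v a b : V, ∃ w, Λ.Adj v w ∧ w ≠ a ∧ w ≠ b := by
      intro v a b
      have hsub : ¬ Λ.neighborFinset v ⊆ {a, b} := by
        intro h
        have h1 := Finset.card_le_card h
        have h2 : ({a, b} : Finset V).card ≤ 2 := by
          have := Finset.card_insert_le a ({b} : Finset V)
          simpa using this
        have h4 := hΛ v
        rw [← Λ.card_neighborFinset_eq_degree v] at h4
        omega
      obtain ⟨w, hw, hw'⟩ := Finset.not_subset.mp hsub
      simp only [Finset.mem_insert, Finset.mem_singleton, not_or] at hw'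
      exact ⟨w, (Λ.mem_neighborFinset v w).mp hw, hw'.1, hw'.2⟩
    have key : ∀ d e : Λ.Dart, d.fst = e.fst → c d = c e := by
      intro d e hfe
      by_cases hs : d.snd = e.snd
      · congr 1
        exact SimpleGraph.Dart.ext _ _ (Prod.ext hfe hs)
      · obtain ⟨w, hw, hwa, hwb⟩ := h3' d.fst d.snd e.snd
        have g : Λ.Dart := ⟨(w, d.fst), hw.symm⟩
        have h1 : (dartGraph Λ).Adj ⟨(w, d.fst), hw.symm⟩ d := Or.inl ⟨rfl, hwa⟩
        have h2 : (dartGraph Λ).Adj ⟨(w, d.fst), hw.symm⟩ e := Or.inl ⟨hfe.symm, hwb⟩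
        exact fin2 _ _ _ (c.valid h1).symm (c.valid h2).symm
    refine ⟨Coloring.mk (fun v => c ⟨(v, (h3 v v).choose), (h3 v v).choose_spec.1⟩) ?_⟩
    intro u v huv
    obtain ⟨w, hw, hwu⟩ := h3 v u
    have hadj : (dartGraph Λ).Adj ⟨(u, v), huv⟩ ⟨(v, w), hw⟩ := Or.inl ⟨rfl, hwu.symm⟩
    rw [key ⟨(u, (h3 u u).choose), (h3 u u).choose_spec.1⟩ ⟨(u, v), huv⟩ rfl,
        key ⟨(v, (h3 v v).choose), (h3 v v).choose_spec.1⟩ ⟨(v, w), hw⟩ rfl]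
    exact c.valid hadj
  · rintro ⟨c⟩
    refine ⟨Coloring.mk (fun d => c d.fst) ?_⟩
    rintro d e (⟨h1, h2⟩ | ⟨h1, h2⟩)
    · rw [h1]; exact c.valid d.adj
    · rw [h1]; exact (c.valid e.adj).symm
end

section
/- Let Λ be a finite connected cubic simple graph with at least one edge. Then Dart(Λ) is connected. -/
open SimpleGraph

lemma dart_reach_symm {V : Type*} [Fintype V] [DecidableEq V]
    (Λ : SimpleGraph V) [DecidableRel Λ.Adj] (hΛ : Λ.IsRegularOfDegree 3)
    (d : Λ.Dart) : (dartGraph Λ).Reachable d d.symm := by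
  obtain ⟨⟨u, v⟩, hadj⟩ := d
  simp only [SimpleGraph.Dart.symm]
  -- find two neighbors of v distinct from u
  have hu : u ∈ Λ.neighborFinset v := by
    simp [SimpleGraph.mem_neighborFinset, hadj.symm]
  have hcard : ((Λ.neighborFinset v).erase u).card = 2 := by
    have h3 : (Λ.neighborFinset v).card = 3 := hΛ v
    rw [Finset.card_erase_of_mem hu, h3]
  have h2 : 1 < ((Λ.neighborFinset v).erase u).card := by omega
  obtain ⟨w1, hw1, w2, hw2, hww⟩ := Finset.one_lt_card.mp h2
  obtain ⟨hw1u, hw1adj⟩ := Finset.mem_erase.mp hw1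
  obtain ⟨hw2u, hw2adj⟩ := Finset.mem_erase.mp hw2
  rw [SimpleGraph.mem_neighborFinset] at hw1adj hw2adj
  have d0 : Λ.Dart := ⟨(u, v), hadj⟩
  have step1 : (dartGraph Λ).Adj ⟨(u, v), hadj⟩ ⟨(v, w1), hw1adj⟩ := by
    left; exact ⟨rfl, fun h => hw1u h.symm⟩
  have step2 : (dartGraph Λ).Adj ⟨(v, w1), hw1adj⟩ ⟨(w2, v), hw2adj.symm⟩ := by
    right; exact ⟨rfl, fun h => hww h.symm⟩
  have step3 : (dartGraph Λ).Adj ⟨(w2, v), hw2adj.symm⟩ ⟨(v, u), hadj.symm⟩ := by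
    left; exact ⟨rfl, hw2u⟩
  exact (step1.reachable.trans step2.reachable).trans step3.reachable

lemma dart_reach_step {V : Type*} [Fintype V] [DecidableEq V]
    (Λ : SimpleGraph V) [DecidableRel Λ.Adj] (hΛ : Λ.IsRegularOfDegree 3)
    (d : Λ.Dart) {w : V} (h : Λ.Adj d.snd w) :
    (dartGraph Λ).Reachable d ⟨(d.snd, w), h⟩ := by
  by_cases hw : w = d.fst
  · have : (⟨(d.snd, w), h⟩ : Λ.Dart) = d.symm := by
      apply SimpleGraph.Dart.ext
      simp [SimpleGraph.Dart.symm, hw, Prod.ext_iff]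
    rw [this]
    exact dart_reach_symm Λ hΛ d
  · refine SimpleGraph.Adj.reachable ?_
    left; exact ⟨rfl, fun he => hw he.symm⟩

lemma dart_reach_walk {V : Type*} [Fintype V] [DecidableEq V]
    (Λ : SimpleGraph V) [DecidableRel Λ.Adj] (hΛ : Λ.IsRegularOfDegree 3)
    {u x : V} (p : Λ.Walk u x) :
    ∀ (d : Λ.Dart), d.snd = u → ∀ (e : Λ.Dart), e.fst = x →
      (dartGraph Λ).Reachable d e := by
  induction p with
  | nil =>
    intro d hd e he
    have hadj : Λ.Adj d.snd e.snd := by rw [hd, ← he]; exact e.adj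
    have : (⟨(d.snd, e.snd), hadj⟩ : Λ.Dart) = e := by
      apply SimpleGraph.Dart.ext
      simp [Prod.ext_iff, hd, ← he]
    rw [← this]
    exact dart_reach_step Λ hΛ d hadj
  | cons h q ih =>
    intro d hd e he
    rename_i a b c
    have hadj : Λ.Adj d.snd b := by rw [hd]; exact h
    refine (dart_reach_step Λ hΛ d hadj).trans ?_
    exact ih ⟨(d.snd, b), hadj⟩ rfl e he

/-- the dart graph of a finite connected cubic graph with an edge is connected. -/
theorem dartGraph_connected {V : Type*} [Fintype V] [DecidableEq V]
    (Λ : SimpleGraph V) [DecidableRel Λ.Adj] (hΛ : Λ.IsRegularOfDegree 3)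
    (hconn : Λ.Connected) (hne : Λ.edgeSet.Nonempty) :
    (dartGraph Λ).Connected := by
  obtain ⟨e, he⟩ := hne
  induction e using Sym2.ind with
  | _ u v =>
    rw [SimpleGraph.mem_edgeSet] at he
    have hnonempty : Nonempty Λ.Dart := ⟨⟨(u, v), he⟩⟩
    rw [SimpleGraph.connected_iff]
    refine ⟨fun d e => ?_, hnonempty⟩
    obtain ⟨p⟩ := hconn d.snd e.fst
    exact dart_reach_walk Λ hΛ p d rfl e rfl
end

section
/- Let Γ be a finite simple graph of odd valence k (k-regular with k odd) and let G ≤ Aut(Γ) act transitively on the vertices and on the edges of Γ. Then G acts transitively on the arcs of Γ. -/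
open SimpleGraph

/-- `arcRel Γ act d e` says some group element maps the arc `d` to the arc `e`. -/
def arcRel {V H : Type*} [Group H] (Γ : SimpleGraph V) (act : H →* Equiv.Perm V)
    (d e : Γ.Dart) : Prop :=
  ∃ g : H, act g d.fst = e.fst ∧ act g d.snd = e.snd

/-- Tutte: a group of automorphisms of a finite `k`-regular graph with `k` odd
which is transitive on vertices and on edges is transitive on arcs. -/
theorem odd_valence_vertex_edge_transitive_implies_arc_transitive
    {V H : Type*} [Fintype V] [DecidableEq V] [Group H]
    (Γ : SimpleGraph V) [DecidableRel Γ.Adj] {k : ℕ}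
    (hreg : Γ.IsRegularOfDegree k) (hodd : Odd k) (hne : Γ.edgeSet.Nonempty)
    (act : H →* Equiv.Perm V)
    (hact : ∀ (g : H) (u v : V), Γ.Adj (act g u) (act g v) ↔ Γ.Adj u v)
    (hvert : ∀ u v : V, ∃ g : H, act g u = v)
    (hedge : ∀ e ∈ Γ.edgeSet, ∀ f ∈ Γ.edgeSet, ∃ g : H, Sym2.map (act g) e = f) :
    ∀ d e : Γ.Dart, arcRel Γ act d e := by
  classical
  intro d e
  -- the action of `H` on darts
  set φ : H → Γ.Dart → Γ.Dart := fun g x => ⟨(act g x.fst, act g x.snd), (hact g _ _).mpr x.adj⟩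
    with hφdef
  have hφ_fst : ∀ g x, (φ g x).fst = act g x.fst := fun _ _ => rfl
  have hφ_snd : ∀ g x, (φ g x).snd = act g x.snd := fun _ _ => rfl
  have hφ_inv : ∀ g x, φ g (φ g⁻¹ x) = x := by
    intro g x
    ext <;> simp [hφdef, map_inv]
  -- every edge's darts meet the orbit of `d`
  have edgehit : ∀ y : Γ.Dart, arcRel Γ act d y ∨ arcRel Γ act d y.symm := by
    intro y
    obtain ⟨g, hg⟩ := hedge d.edge d.edge_mem y.edge y.edge_mem
    have hg' : s(act g d.fst, act g d.snd) = s(y.fst, y.snd) := by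
      rw [← Sym2.map_pair_eq]; exact hg
    rw [Sym2.eq_iff] at hg'
    rcases hg' with ⟨h1, h2⟩ | ⟨h1, h2⟩
    · exact Or.inl ⟨g, h1, h2⟩
    · exact Or.inr ⟨g, h1, h2⟩
  by_cases hA : ∃ g : H, act g d.fst = d.snd ∧ act g d.snd = d.fst
  · -- some element reverses the dart `d`
    obtain ⟨h0, h1, h2⟩ := hA
    rcases edgehit e with h | ⟨g, hg1, hg2⟩
    · exact h
    · simp only [Dart.symm_toProd, Prod.fst_swap, Prod.snd_swap] at hg1 hg2
      refine ⟨g * h0, ?_, ?_⟩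
      · rw [map_mul, Equiv.Perm.mul_apply, h1]; exact hg2
      · rw [map_mul, Equiv.Perm.mul_apply, h2]; exact hg1
  · exfalso
    -- exclusivity: at most one dart per edge is in the orbit
    have hexcl : ∀ y : Γ.Dart, arcRel Γ act d y → ¬ arcRel Γ act d y.symm := by
      rintro y ⟨g₁, h11, h12⟩ ⟨g₂, h21, h22⟩
      simp only [Dart.symm_toProd, Prod.fst_swap, Prod.snd_swap] at h21 h22
      refine hA ⟨g₂⁻¹ * g₁, ?_, ?_⟩
      · rw [map_mul, map_inv, Equiv.Perm.mul_apply, h11, ← h22, Equiv.Perm.inv_def, Equiv.symm_apply_apply]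
      · rw [map_mul, map_inv, Equiv.Perm.mul_apply, h12, ← h21, Equiv.Perm.inv_def, Equiv.symm_apply_apply]
    -- the orbit, as a finset
    set A : Finset Γ.Dart := Finset.univ.filter (fun y => arcRel Γ act d y) with hAdef
    have memA : ∀ y, y ∈ A ↔ arcRel Γ act d y := by
      intro y; simp [hAdef]
    have hA_inv : ∀ (g : H) (y : Γ.Dart), y ∈ A → φ g y ∈ A := by
      intro g y hy
      rw [memA] at hy ⊢
      obtain ⟨g', p1, p2⟩ := hy
      exact ⟨g * g', by rw [map_mul, Equiv.Perm.mul_apply, p1],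
        by rw [map_mul, Equiv.Perm.mul_apply, p2]⟩
    -- constancy of fiber counts
    have hconst : ∀ (f : Γ.Dart → V), (∀ g y, f (φ g y) = act g (f y)) → ∀ u v : V,
        (A.filter (fun y => f y = u)).card = (A.filter (fun y => f y = v)).card := by
      intro f hf u v
      obtain ⟨g, hg⟩ := hvert u v
      refine Finset.card_nbij' (φ g) (φ g⁻¹) ?_ ?_ ?_ ?_
      · intro y hy
        rw [Finset.mem_coe, Finset.mem_filter] at hy; rw [Finset.mem_coe, Finset.mem_filter]
        exact ⟨hA_inv g y hy.1, by rw [hf, hy.2, hg]⟩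
      · intro y hy
        rw [Finset.mem_coe, Finset.mem_filter] at hy; rw [Finset.mem_coe, Finset.mem_filter]
        refine ⟨hA_inv g⁻¹ y hy.1, ?_⟩
        rw [hf, hy.2, ← hg, map_inv, Equiv.Perm.inv_def, Equiv.symm_apply_apply]
      · intro y _
        ext <;> simp [hφdef, map_inv]
      · intro y _
        exact hφ_inv g y
    set s : V → ℕ := fun u => (A.filter (fun y => y.fst = u)).card with hsdef
    set t : V → ℕ := fun u => (A.filter (fun y => y.snd = u)).card with htdef
    have hs_const : ∀ u v, s u = s v :=
      hconst (fun y => y.fst) (fun _ _ => rfl)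
    have ht_const : ∀ u v, t u = t v :=
      hconst (fun y => y.snd) (fun _ _ => rfl)
    -- per-vertex partition: s u + t u = k
    have key : ∀ u : V, s u + t u = k := by
      intro u
      have hd : (Finset.univ.filter (fun y : Γ.Dart => y.fst = u)).card = k := by
        rw [Γ.dart_fst_fiber_card_eq_degree]; exact hreg u
      have hsplit := Finset.card_filter_add_card_filter_not
        (s := Finset.univ.filter (fun y : Γ.Dart => y.fst = u))
        (p := fun y => arcRel Γ act d y)
      have h1 : ((Finset.univ.filter (fun y : Γ.Dart => y.fst = u)).filter
          (fun y => arcRel Γ act d y)).card = s u := by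
        rw [hsdef, hAdef]
        congr 1
        ext y
        simp [and_comm]
      have h2 : ((Finset.univ.filter (fun y : Γ.Dart => y.fst = u)).filter
          (fun y => ¬ arcRel Γ act d y)).card = t u := by
        refine Finset.card_nbij' Dart.symm Dart.symm ?_ ?_ ?_ ?_
        · intro y hy
          simp only [Finset.mem_coe, Finset.mem_filter, Finset.mem_univ, true_and] at hy
          rw [Finset.mem_coe, Finset.mem_filter]
          refine ⟨(memA _).mpr ?_, ?_⟩
          · rcases edgehit y with h | h
            · exact absurd h hy.2
            · exact h
          · simpa using hy.1
        · intro y hy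
          rw [Finset.mem_coe, Finset.mem_filter] at hy
          rw [memA] at hy
          simp only [Finset.mem_coe, Finset.mem_filter, Finset.mem_univ, true_and]
          constructor
          · simpa using hy.2
          · intro hcon
            exact hexcl y.symm hcon (by simpa using hy.1)
        · intro y _; simp
        · intro y _; simp
      rw [← hd, ← hsplit, h1, h2]
    -- sum the fibers two ways
    have hsumS : ∑ u : V, s u = A.card :=
      (Finset.card_eq_sum_card_fiberwise (f := fun y : Γ.Dart => y.fst)
        (fun y _ => Finset.mem_univ y.fst)).symm
    have hsumT : ∑ u : V, t u = A.card :=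
      (Finset.card_eq_sum_card_fiberwise (f := fun y : Γ.Dart => y.snd)
        (fun y _ => Finset.mem_univ y.snd)).symm
    have hS : ∑ u : V, s u = Fintype.card V * s d.fst := by
      rw [Finset.sum_congr rfl (fun u _ => hs_const u d.fst), Finset.sum_const,
        smul_eq_mul, Finset.card_univ]
    have hT : ∑ u : V, t u = Fintype.card V * t d.fst := by
      rw [Finset.sum_congr rfl (fun u _ => ht_const u d.fst), Finset.sum_const,
        smul_eq_mul, Finset.card_univ]
    have hcardpos : 0 < Fintype.card V := Fintype.card_pos_iff.mpr ⟨d.fst⟩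
    have hst : s d.fst = t d.fst := by
      have := hS ▸ hT ▸ (hsumS.trans hsumT.symm)
      exact Nat.eq_of_mul_eq_mul_left hcardpos this
    have hk : k = 2 * s d.fst := by
      have := key d.fst
      omega
    exact (Nat.not_even_iff_odd.mpr hodd) ⟨s d.fst, by omega⟩
end

section
/- Let Γ be a finite simple graph and G ≤ Aut(Γ) a group acting transitively on the vertices and edges but not on the arcs of Γ. Then every vertex of Γ has even degree. -/
open SimpleGraph

/-- if a group of automorphisms of a finite simple graph is transitive on
vertices and on edges but not on arcs, then every vertex has even degree. -/
theorem half_arc_transitive_implies_even_degree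
    {V H : Type*} [Fintype V] [DecidableEq V] [Group H]
    (Γ : SimpleGraph V) [DecidableRel Γ.Adj] (hne : Γ.edgeSet.Nonempty)
    (act : H →* Equiv.Perm V)
    (hact : ∀ (g : H) (u v : V), Γ.Adj (act g u) (act g v) ↔ Γ.Adj u v)
    (hvert : ∀ u v : V, ∃ g : H, act g u = v)
    (hedge : ∀ e ∈ Γ.edgeSet, ∀ f ∈ Γ.edgeSet, ∃ g : H, Sym2.map (act g) e = f)
    (hnarc : ¬ ∀ d e : Γ.Dart, arcRel Γ act d e) :
    ∀ v : V, Even (Γ.degree v) := by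
  classical
  set A : Γ.Dart → Γ.Dart → Prop := arcRel Γ act with hA
  have hrefl : ∀ d, A d d := fun d => ⟨1, by simp, by simp⟩
  have hsymm : ∀ d e, A d e → A e d := by
    rintro d e ⟨g, h1, h2⟩
    exact ⟨g⁻¹, by simp [← h1], by simp [← h2]⟩
  have htrans : ∀ d e f, A d e → A e f → A d f := by
    rintro d e f ⟨g, h1, h2⟩ ⟨g', h1', h2'⟩
    exact ⟨g' * g, by simp [map_mul, h1, h1'], by simp [map_mul, h2, h2']⟩
  have hsc : ∀ d e, A d e → A d.symm e.symm := by
    rintro d e ⟨g, h1, h2⟩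
    exact ⟨g, by simpa [Dart.symm] using h2, by simpa [Dart.symm] using h1⟩
  have hsemi : ∀ d e : Γ.Dart, A d e ∨ A d e.symm := by
    intro d e
    obtain ⟨g, hg⟩ := hedge d.edge d.edge_mem e.edge e.edge_mem
    have hg2 : Sym2.map (act g) s(d.fst, d.snd) = s(e.fst, e.snd) := hg
    rw [Sym2.map_pair_eq, Sym2.eq_iff] at hg2
    have := hg2
    rcases this with ⟨h1, h2⟩ | ⟨h1, h2⟩
    · exact Or.inl ⟨g, h1, h2⟩
    · exact Or.inr ⟨g, by simpa [Dart.symm] using h1, by simpa [Dart.symm] using h2⟩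
  -- no dart is related to its reversal
  have hnosym : ∀ d : Γ.Dart, ¬ A d d.symm := by
    intro d hd
    apply hnarc
    have key : ∀ b : Γ.Dart, A b b.symm := by
      intro b
      rcases hsemi b d with hbd | hbd
      · exact htrans _ _ _ hbd (htrans _ _ _ hd (hsc _ _ (hsymm _ _ hbd)))
      · have : A b.symm d := by simpa [Dart.symm_symm] using hsc _ _ hbd
        exact htrans _ _ _ hbd (htrans _ _ _ (hsymm _ _ hd) (hsymm _ _ this))
    intro a b
    rcases hsemi a b with h | h
    · exact h
    · exact htrans _ _ _ h (hsymm _ _ (key b))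
  -- pick a base dart
  obtain ⟨u0, w0, h0⟩ : ∃ u w, Γ.Adj u w := by
    obtain ⟨e, he⟩ := hne
    induction e using Sym2.ind with
    | _ x y => exact ⟨x, y, he⟩
  set d0 : Γ.Dart := ⟨(u0, w0), h0⟩ with hd0
  -- the two classes of neighbors
  set P : V → V → Prop := fun v w => ∃ g : H, act g d0.fst = v ∧ act g d0.snd = w with hP
  have hPdart : ∀ e : Γ.Dart, A d0 e ↔ P e.fst e.snd := fun e => Iff.rfl
  have hPdartsymm : ∀ e : Γ.Dart, A d0 e.symm ↔ P e.snd e.fst := fun e => Iff.rfl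
  have hPmap : ∀ (g : H) (v w : V), P v w → P (act g v) (act g w) := by
    rintro g v w ⟨g', h1, h2⟩
    exact ⟨g * g', by simp [map_mul, h1], by simp [map_mul, h2]⟩
  set sp : V → Finset V := fun v => (Γ.neighborFinset v).filter (fun w => P v w) with hsp
  set sm : V → Finset V := fun v => (Γ.neighborFinset v).filter (fun w => P w v) with hsm
  -- partition of the neighborhood
  have hdeg : ∀ v : V, Γ.degree v = (sp v).card + (sm v).card := by
    intro v
    have hunion : Γ.neighborFinset v = sp v ∪ sm v := by
      ext w
      simp only [hsp, hsm, Finset.mem_union, Finset.mem_filter]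
      constructor
      · intro hw
        have hadj : Γ.Adj v w := by simpa using hw
        rcases hsemi d0 ⟨(v, w), hadj⟩ with h | h
        · exact Or.inl ⟨hw, (hPdart _).mp h⟩
        · exact Or.inr ⟨hw, (hPdartsymm _).mp h⟩
      · rintro (⟨hw, _⟩ | ⟨hw, _⟩) <;> exact hw
    have hdisj : Disjoint (sp v) (sm v) := by
      rw [Finset.disjoint_left]
      intro w hw1 hw2
      simp only [hsp, hsm, Finset.mem_filter] at hw1 hw2
      have hadj : Γ.Adj v w := by simpa using hw1.1
      set e : Γ.Dart := ⟨(v, w), hadj⟩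
      exact hnosym e (htrans _ _ _ (hsymm _ _ ((hPdart e).mpr hw1.2))
        ((hPdartsymm e).mpr hw2.2))
    rw [← card_neighborFinset_eq_degree, hunion, Finset.card_union_of_disjoint hdisj]
  -- constancy of the two class sizes
  have hconst : ∀ (u v : V), (sp u).card = (sp v).card ∧ (sm u).card = (sm v).card := by
    intro u v
    obtain ⟨g, hg⟩ := hvert u v
    have hmem : ∀ w, Γ.Adj u w → Γ.Adj v (act g w) := by
      intro w hw
      rw [← hg]
      exact (hact g u w).mpr hw
    have hmem' : ∀ w, Γ.Adj v w → Γ.Adj u (act g⁻¹ w) := by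
      intro w hw
      have := (hact g u (act g⁻¹ w)).mp (by simpa [hg] using hw)
      exact this
    constructor
    · apply Finset.card_bij' (fun w _ => act g w) (fun w _ => act g⁻¹ w)
      · intro w hw
        simp only [hsp, Finset.mem_filter, mem_neighborFinset] at hw ⊢
        exact ⟨hmem w hw.1, hg ▸ hPmap g u w hw.2⟩
      · intro w hw
        simp only [hsp, Finset.mem_filter, mem_neighborFinset] at hw ⊢
        refine ⟨hmem' w hw.1, ?_⟩
        have := hPmap g⁻¹ v w hw.2
        simpa [← hg] using this
      · intro w _; simp
      · intro w _; simp
    · apply Finset.card_bij' (fun w _ => act g w) (fun w _ => act g⁻¹ w)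
      · intro w hw
        simp only [hsm, Finset.mem_filter, mem_neighborFinset] at hw ⊢
        exact ⟨hmem w hw.1, hg ▸ hPmap g w u hw.2⟩
      · intro w hw
        simp only [hsm, Finset.mem_filter, mem_neighborFinset] at hw ⊢
        refine ⟨hmem' w hw.1, ?_⟩
        have := hPmap g⁻¹ w v hw.2
        simpa [← hg] using this
      · intro w _; simp
      · intro w _; simp
  -- double counting of the dart class of d0
  set D : Finset Γ.Dart := Finset.univ.filter (fun e => P e.fst e.snd) with hD
  have hcount1 : D.card = ∑ v : V, (sp v).card := by
    rw [Finset.card_eq_sum_card_fiberwise (f := fun e : Γ.Dart => e.fst)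
      (t := Finset.univ) (fun e _ => Finset.mem_univ _)]
    refine Finset.sum_congr rfl fun v _ => ?_
    apply Finset.card_bij (fun e _ => e.snd)
    · intro e he
      simp only [hD, Finset.mem_filter, Finset.mem_univ, true_and] at he
      simp only [hsp, Finset.mem_filter, mem_neighborFinset]
      exact ⟨he.2 ▸ e.adj, he.2 ▸ he.1⟩
    · intro e1 he1 e2 he2 h
      simp only [hD, Finset.mem_filter] at he1 he2
      exact Dart.ext _ _ (Prod.ext (he1.2.trans he2.2.symm) h)
    · intro w hw
      simp only [hsp, Finset.mem_filter, mem_neighborFinset] at hw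
      exact ⟨⟨(v, w), hw.1⟩, by simp [hD, hw.2], rfl⟩
  have hcount2 : D.card = ∑ v : V, (sm v).card := by
    rw [Finset.card_eq_sum_card_fiberwise (f := fun e : Γ.Dart => e.snd)
      (t := Finset.univ) (fun e _ => Finset.mem_univ _)]
    refine Finset.sum_congr rfl fun v _ => ?_
    apply Finset.card_bij (fun e _ => e.fst)
    · intro e he
      simp only [hD, Finset.mem_filter, Finset.mem_univ, true_and] at he
      simp only [hsm, Finset.mem_filter, mem_neighborFinset]
      exact ⟨he.2 ▸ e.adj.symm, he.2 ▸ he.1⟩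
    · intro e1 he1 e2 he2 h
      simp only [hD, Finset.mem_filter] at he1 he2
      exact Dart.ext _ _ (Prod.ext h (he1.2.trans he2.2.symm))
    · intro w hw
      simp only [hsm, Finset.mem_filter, mem_neighborFinset] at hw
      exact ⟨⟨(w, v), hw.1.symm⟩, by simp [hD, hw.2], rfl⟩
  -- conclude equality of the class sizes
  intro v
  have hsum1 : ∑ x : V, (sp x).card = Fintype.card V * (sp v).card := by
    rw [Finset.sum_congr rfl (fun x _ => (hconst x v).1), Finset.sum_const, smul_eq_mul,
      Finset.card_univ]
  have hsum2 : ∑ x : V, (sm x).card = Fintype.card V * (sm v).card := by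
    rw [Finset.sum_congr rfl (fun x _ => (hconst x v).2), Finset.sum_const, smul_eq_mul,
      Finset.card_univ]
  have hcardpos : 0 < Fintype.card V := Fintype.card_pos_iff.mpr ⟨u0⟩
  have heq : (sp v).card = (sm v).card :=
    Nat.eq_of_mul_eq_mul_left hcardpos (by rw [← hsum1, ← hsum2, ← hcount1, ← hcount2])
  rw [hdeg v, heq]
  exact ⟨(sm v).card, rfl⟩
end

section
/- Let Λ be a finite connected cubic simple graph and G ≤ Aut(Λ) a group acting transitively on the 2-arcs of Λ. Then the induced action of G on Dart(Λ) is vertex-transitive and edge-transitive but not arc-transitive (i.e., G is half-arc-transitive on Dart(Λ)). -/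
open SimpleGraph

/-- A 2-arc of `Λ`: an ordered triple `(u,v,w)` with `u ~ v`, `v ~ w` and `u ≠ w`. -/
def TwoArc {V : Type*} (Λ : SimpleGraph V) : Type _ :=
  {t : V × V × V // Λ.Adj t.1 t.2.1 ∧ Λ.Adj t.2.1 t.2.2 ∧ t.1 ≠ t.2.2}

/-- if a group acts 2-arc-transitively on a finite connected cubic graph `Λ`,
then its induced action on `Dart(Λ)` is vertex- and edge-transitive but not arc-transitive. -/
theorem two_arc_transitive_gives_half_arc_transitive_dartGraph
    {V H : Type*} [Fintype V] [DecidableEq V] [Group H]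
    (Λ : SimpleGraph V) [DecidableRel Λ.Adj]
    (hΛ : Λ.IsRegularOfDegree 3) (hconn : Λ.Connected)
    (act : H →* Equiv.Perm V)
    (hact : ∀ (g : H) (u v : V), Λ.Adj (act g u) (act g v) ↔ Λ.Adj u v)
    (h2arc : ∀ t t' : TwoArc Λ, ∃ g : H,
      act g t.1.1 = t'.1.1 ∧ act g t.1.2.1 = t'.1.2.1 ∧ act g t.1.2.2 = t'.1.2.2) :
    (∀ d e : Λ.Dart, ∃ g : H, act g d.fst = e.fst ∧ act g d.snd = e.snd) ∧
    (∀ d₁ d₂ e₁ e₂ : Λ.Dart, (dartGraph Λ).Adj d₁ d₂ → (dartGraph Λ).Adj e₁ e₂ →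
      ∃ g : H,
        (act g d₁.fst = e₁.fst ∧ act g d₁.snd = e₁.snd ∧
         act g d₂.fst = e₂.fst ∧ act g d₂.snd = e₂.snd) ∨
        (act g d₁.fst = e₂.fst ∧ act g d₁.snd = e₂.snd ∧
         act g d₂.fst = e₁.fst ∧ act g d₂.snd = e₁.snd)) ∧
    ¬ (∀ d₁ d₂ e₁ e₂ : Λ.Dart, (dartGraph Λ).Adj d₁ d₂ → (dartGraph Λ).Adj e₁ e₂ →
      ∃ g : H,
        act g d₁.fst = e₁.fst ∧ act g d₁.snd = e₁.snd ∧
        act g d₂.fst = e₂.fst ∧ act g d₂.snd = e₂.snd) := by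
  have hext : ∀ d : Λ.Dart, ∃ w : V, Λ.Adj d.snd w ∧ d.fst ≠ w := by
    intro d
    have hdeg : (Λ.neighborFinset d.snd).card = 3 := hΛ d.snd
    obtain ⟨w, hw, hne⟩ := Finset.exists_mem_ne (s := Λ.neighborFinset d.snd) (by omega) d.fst
    exact ⟨w, (Λ.mem_neighborFinset _ _).1 hw, hne.symm⟩
  refine ⟨?_, ?_, ?_⟩
  · intro d e
    obtain ⟨w, hw, hwne⟩ := hext d
    obtain ⟨x, hx, hxne⟩ := hext e
    obtain ⟨g, h1, h2, _⟩ := h2arc ⟨(d.fst, d.snd, w), d.adj, hw, hwne⟩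
      ⟨(e.fst, e.snd, x), e.adj, hx, hxne⟩
    exact ⟨g, h1, h2⟩
  · intro d₁ d₂ e₁ e₂ hd he
    rcases hd with ⟨hd1, hd2⟩ | ⟨hd1, hd2⟩ <;> rcases he with ⟨he1, he2⟩ | ⟨he1, he2⟩
    · obtain ⟨g, h1, h2, h3⟩ := h2arc
        ⟨(d₁.fst, d₁.snd, d₂.snd), d₁.adj, by rw [← hd1]; exact d₂.adj, hd2⟩
        ⟨(e₁.fst, e₁.snd, e₂.snd), e₁.adj, by rw [← he1]; exact e₂.adj, he2⟩
      exact ⟨g, Or.inl ⟨h1, h2, by rw [hd1, h2]; exact he1.symm, h3⟩⟩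
    · obtain ⟨g, h1, h2, h3⟩ := h2arc
        ⟨(d₁.fst, d₁.snd, d₂.snd), d₁.adj, by rw [← hd1]; exact d₂.adj, hd2⟩
        ⟨(e₂.fst, e₁.fst, e₁.snd), by rw [he1]; exact e₂.adj, e₁.adj, he2⟩
      exact ⟨g, Or.inr ⟨h1, by rw [h2]; exact he1, by rw [hd1]; exact h2, h3⟩⟩
    · obtain ⟨g, h1, h2, h3⟩ := h2arc
        ⟨(d₂.fst, d₁.fst, d₁.snd), by rw [hd1]; exact d₂.adj, d₁.adj, hd2⟩
        ⟨(e₁.fst, e₁.snd, e₂.snd), e₁.adj, by rw [← he1]; exact e₂.adj, he2⟩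
      exact ⟨g, Or.inr ⟨by rw [h2]; exact he1.symm, h3, h1, by rw [← hd1]; exact h2⟩⟩
    · obtain ⟨g, h1, h2, h3⟩ := h2arc
        ⟨(d₂.fst, d₁.fst, d₁.snd), by rw [hd1]; exact d₂.adj, d₁.adj, hd2⟩
        ⟨(e₂.fst, e₁.fst, e₁.snd), by rw [he1]; exact e₂.adj, e₁.adj, he2⟩
      exact ⟨g, Or.inl ⟨h2, h3, h1, by rw [← hd1, h2]; exact he1⟩⟩
  · intro hat
    obtain ⟨v⟩ := hconn.nonempty
    have hdeg : (Λ.neighborFinset v).card = 3 := hΛ v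
    obtain ⟨u, hu, w, hw, huw⟩ := (Finset.one_lt_card (s := Λ.neighborFinset v)).mp (by omega)
    have hu' : Λ.Adj v u := (Λ.mem_neighborFinset _ _).1 hu
    have hw' : Λ.Adj v w := (Λ.mem_neighborFinset _ _).1 hw
    set d₁ : Λ.Dart := ⟨(u, v), hu'.symm⟩
    set d₂ : Λ.Dart := ⟨(v, w), hw'⟩
    have hadj : (dartGraph Λ).Adj d₁ d₂ := Or.inl ⟨rfl, huw⟩
    obtain ⟨g, h1, h2, h3, h4⟩ := hat d₁ d₂ d₂ d₁ hadj hadj.symm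
    -- h2 : act g v = w, h3 : act g v = u
    exact huw (h3.symm.trans h2)
end
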